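/- Let α > 0, let μ : ℝ → ℝ be continuous and nonnegative, let φ : [0,∞) → ℝ be locally integrable, and let b₁ : [0,∞) → ℝ be continuously differentiable and positive. Set π(a) = exp(−∫₀^a μ(s) ds). Define B(t) = φ(mα − t) · (∏_{i=1}^{m} b₁(t − (i−1)α)) · exp(−∫₀^{t−(m−1)α} μ(s + mα − t) ds) · exp(−(m−1)·∫₀^α μ(s) ds), where m = ⌊t/α⌋ + 1. Then B satisfies the renewal functional equation: B(t) = b₁(t)·(π(α)/π(α−t))·φ(α−t) for 0 ≤ t < α, and B(t) = b₁(t)·π(α)·B(t−α) for t ≥ α. -/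

import Mathlib

open MeasureTheory Real Set

/-- Corollary 2.4: the explicit formula
`B(t) = φ(mα−t)·(∏_{i=1}^m b₁(t−(i−1)α))·exp(−∫₀^{t−(m−1)α} μ(s+mα−t) ds)·exp(−(m−1)∫₀^α μ)`,
with `m = ⌊t/α⌋+1`, solves the renewal functional equation
`B(t) = b₁(t)·(π(α)/π(α−t))·φ(α−t)` for `0 ≤ t < α` and
`B(t) = b₁(t)·π(α)·B(t−α)` for `t ≥ α`, where `π(a) = exp(−∫₀^a μ)`. -/
theorem renewal_functional_equation_solution
    (α : ℝ) (hα : 0 < α)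
    (μ : ℝ → ℝ) (hμc : Continuous μ) (hμ0 : ∀ x, 0 ≤ μ x)
    (φ : ℝ → ℝ) (hφ : MeasureTheory.LocallyIntegrableOn φ (Set.Ici 0) volume)
    (b₁ : ℝ → ℝ) (hb₁ : ContDiffOn ℝ 1 b₁ (Set.Ici 0)) (hb₁pos : ∀ t, 0 ≤ t → 0 < b₁ t)
    (pi : ℝ → ℝ) (hpi : ∀ a, pi a = Real.exp (-(∫ s in (0:ℝ)..a, μ s)))
    (B : ℝ → ℝ)
    (hB : ∀ t, 0 ≤ t → ∀ m : ℕ, (m : ℤ) = ⌊t / α⌋ + 1 →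
      B t = φ ((m : ℝ) * α - t) * (∏ i ∈ Finset.range m, b₁ (t - (i : ℝ) * α)) *
        Real.exp (-(∫ s in (0:ℝ)..(t - ((m : ℝ) - 1) * α), μ (s + (m : ℝ) * α - t))) *
        Real.exp (-(((m : ℝ) - 1) * ∫ s in (0:ℝ)..α, μ s))) :
    (∀ t, 0 ≤ t → t < α → B t = b₁ t * (pi α / pi (α - t)) * φ (α - t)) ∧
    (∀ t, α ≤ t → B t = b₁ t * pi α * B (t - α)) := by
  have hμint : ∀ a b : ℝ, IntervalIntegrable μ volume a b :=
    fun a b => hμc.intervalIntegrable a b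
  constructor
  · intro t ht htα
    have hfloor : ⌊t / α⌋ = 0 := by
      rw [Int.floor_eq_zero_iff]
      constructor
      · exact div_nonneg ht hα.le
      · rw [div_lt_one hα]; exact htα
    have h1 := hB t ht 1 (by simp [hfloor])
    simp only [Nat.cast_one, one_mul, sub_self, zero_mul, sub_zero, Finset.prod_range_one,
      Nat.cast_zero, neg_zero, Real.exp_zero, mul_one] at h1
    have harg : ∀ s : ℝ, s + α - t = s + (α - t) := fun s => by ring
    simp only [harg] at h1
    rw [intervalIntegral.integral_comp_add_right (fun x => μ x) (α - t)] at h1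
    have hlim : t + (α - t) = α := by ring
    rw [zero_add, hlim] at h1
    have hsplit : (∫ s in (0:ℝ)..(α - t), μ s) + (∫ s in (α - t)..α, μ s)
        = ∫ s in (0:ℝ)..α, μ s :=
      intervalIntegral.integral_add_adjacent_intervals (hμint _ _) (hμint _ _)
    rw [h1, hpi, hpi, ← Real.exp_sub, ← hsplit]
    ring_nf
  · intro t ht
    have ht0 : (0:ℝ) ≤ t := le_trans hα.le ht
    have hfl1 : (1:ℤ) ≤ ⌊t / α⌋ := by
      rw [Int.le_floor]; push_cast; rw [le_div_iff₀ hα]; linarith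
    set n : ℕ := (⌊t / α⌋).toNat with hn
    have hnz : (n : ℤ) = ⌊t / α⌋ := Int.toNat_of_nonneg (by linarith)
    have hfl2 : ⌊(t - α) / α⌋ = ⌊t / α⌋ - 1 := by
      rw [sub_div, div_self hα.ne', show (1:ℝ) = ((1:ℤ):ℝ) by norm_num,
        Int.floor_sub_intCast]
    have h1 := hB t ht0 (n + 1) (by push_cast; rw [hnz])
    have h2 := hB (t - α) (by linarith) n (by rw [hfl2]; omega)
    push_cast at h1
    -- rewrite h2's pieces to match h1
    have hargφ : (n:ℝ) * α - (t - α) = ((n:ℝ) + 1) * α - t := by ring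
    have hargμ : ∀ s : ℝ, s + (n:ℝ) * α - (t - α) = s + ((n:ℝ) + 1) * α - t :=
      fun s => by ring
    have hlim2 : t - α - ((n:ℝ) - 1) * α = t - ((n:ℝ) + 1 - 1) * α := by ring
    have hprodarg : ∀ x : ℝ, t - α - x * α = t - (x + 1) * α := fun x => by ring
    rw [hargφ, hlim2] at h2
    simp only [hargμ, hprodarg] at h2
    -- split product in h1
    rw [Finset.prod_range_succ'] at h1
    push_cast at h1
    simp only [zero_add, zero_mul, sub_zero] at h1
    have hexp : Real.exp (-(((n:ℝ) + 1 - 1) * ∫ s in (0:ℝ)..α, μ s))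
        = Real.exp (-(∫ s in (0:ℝ)..α, μ s)) *
          Real.exp (-(((n:ℝ) - 1) * ∫ s in (0:ℝ)..α, μ s)) := by
      rw [← Real.exp_add]; ring_nf
    rw [h1, h2, hpi, hexp]
    ring
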